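/- arXiv:1809.08830 — 2 statements merged into one kernel-verified Lean document; each statement's English description precedes it below -/
import Mathlib

section
/- Let ρ > 0 and let Σ ∈ ℝ^{d×d} be symmetric positive definite. Every symmetric positive semidefinite matrix S ∈ ℝ^{d×d} with B(S) ≤ ρ² satisfies Tr(S) ≤ (ρ + √(Tr Σ))², and consequently S ⪯ (ρ + √(Tr Σ))²·I_d. -/
open Matrix

-- `msqrt M` is the unique symmetric PSD square root of a symmetric PSD matrix `M` (else `0`).
open Classical in
noncomputable def msqrt {ι : Type*} [Fintype ι] [DecidableEq ι] (M : Matrix ι ι ℝ) : Matrix ι ι ℝ :=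
  if h : M.PosSemidef then
    h.1.eigenvectorUnitary.1 * diagonal ((↑) ∘ (√·) ∘ h.1.eigenvalues) *
      (star h.1.eigenvectorUnitary : Matrix ι ι ℝ)
  else 0

/-- `Bdist Sg S = Tr(S + Σ − 2(Σ^{1/2} S Σ^{1/2})^{1/2})`. -/
noncomputable def Bdist {ι : Type*} [Fintype ι] [DecidableEq ι] (Sg S : Matrix ι ι ℝ) : ℝ :=
  (S + Sg - (2:ℝ) • msqrt (msqrt Sg * S * msqrt Sg)).trace

section Aux

lemma msqrt_spec {d : ℕ} {M : Matrix (Fin d) (Fin d) ℝ} (h : M.PosSemidef) :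
    (msqrt M).PosSemidef ∧ msqrt M * msqrt M = M := by
  have hm : msqrt M = (h.1.eigenvectorUnitary : Matrix (Fin d) (Fin d) ℝ) *
      diagonal ((↑) ∘ (√·) ∘ h.1.eigenvalues) *
      (h.1.eigenvectorUnitary : Matrix (Fin d) (Fin d) ℝ)ᴴ := by
    rw [msqrt, dif_pos h]; rfl
  rw [hm]
  constructor
  · refine PosSemidef.mul_mul_conjTranspose_same ?_ _
    rw [posSemidef_diagonal_iff]
    intro i
    simp
  · have hUU : (h.1.eigenvectorUnitary : Matrix (Fin d) (Fin d) ℝ)ᴴ *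
        (h.1.eigenvectorUnitary : Matrix (Fin d) (Fin d) ℝ) = 1 :=
      by have := Unitary.coe_star_mul_self h.1.eigenvectorUnitary; exact this
    have hDD : diagonal (((↑) ∘ (√·) ∘ h.1.eigenvalues) : Fin d → ℝ) *
        diagonal ((↑) ∘ (√·) ∘ h.1.eigenvalues) = diagonal (RCLike.ofReal ∘ h.1.eigenvalues) := by
      rw [diagonal_mul_diagonal]
      congr 1
      funext i
      simp [Real.mul_self_sqrt (h.eigenvalues_nonneg i)]
    conv_rhs => rw [h.1.spectral_theorem, Unitary.conjStarAlgAut_apply]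
    simp only [Matrix.mul_assoc]
    rw [← Matrix.mul_assoc _ (h.1.eigenvectorUnitary : Matrix (Fin d) (Fin d) ℝ), hUU,
      Matrix.one_mul, ← Matrix.mul_assoc (diagonal _) (diagonal _), hDD]
    rfl


variable {d : ℕ}

lemma aux_trace_self_mul_conjTranspose_nonneg (C : Matrix (Fin d) (Fin d) ℝ) :
    0 ≤ (C * Cᴴ).trace := by
  rw [Matrix.trace]
  refine Finset.sum_nonneg fun i _ => ?_
  simp only [Matrix.diag_apply, Matrix.mul_apply, Matrix.conjTranspose_apply, star_trivial]
  exact Finset.sum_nonneg fun j _ => mul_self_nonneg _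

lemma aux_key_ineq (R S N Ri Sg : Matrix (Fin d) (Fin d) ℝ) (hRsym : Rᵀ = R) (hNsym : Nᵀ = N)
    (h1 : R * Ri = 1) (h2 : Ri * R = 1) (hRR : R * R = Sg)
    (hNN : N * N = R * S * R) (t : ℝ) (ht : 0 < t) :
    2 * N.trace ≤ t * Sg.trace + S.trace / t := by
  have hRiH : Riᵀ = Ri := by
    have : R⁻¹ = Ri := Matrix.inv_eq_left_inv h2
    rw [← this, Matrix.transpose_nonsing_inv, hRsym]
  set a := Real.sqrt t with ha
  have ha0 : a ≠ 0 := by positivity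
  set C := a • R - a⁻¹ • (N * Ri) with hC
  have hCH : Cᴴ = a • R - a⁻¹ • (Ri * N) := by
    simp [hC, conjTranspose_sub, conjTranspose_smul, conjTranspose_mul, hRsym, hNsym, hRiH,
      Matrix.conjTranspose_eq_transpose_of_trivial]
  have expand : C * Cᴴ = t • Sg - N - N + t⁻¹ • (N * Ri * (Ri * N)) := by
    rw [hC, hCH]
    have hat : a * a = t := Real.mul_self_sqrt ht.le
    simp only [Matrix.sub_mul, Matrix.mul_sub, Matrix.smul_mul, Matrix.mul_smul, smul_smul,
      smul_sub]
    rw [hat, inv_mul_cancel₀ ha0, mul_inv_cancel₀ ha0, ← mul_inv, hat]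
    rw [hRR]
    have e1 : R * (Ri * N) = N := by rw [← Matrix.mul_assoc, h1, Matrix.one_mul]
    have e2 : N * Ri * R = N := by rw [Matrix.mul_assoc, h2, Matrix.mul_one]
    rw [e1, e2]
    simp only [one_smul]
    abel
  have htr := aux_trace_self_mul_conjTranspose_nonneg C
  rw [expand] at htr
  have htr2 : (N * Ri * (Ri * N)).trace = S.trace := by
    rw [← Matrix.mul_assoc, Matrix.trace_mul_cycle, ← Matrix.mul_assoc N N Ri, hNN,
      Matrix.mul_assoc (R * S) R Ri, h1, Matrix.mul_one, Matrix.trace_mul_cycle, h2,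
      Matrix.one_mul]
  rw [Matrix.trace_add, Matrix.trace_sub, Matrix.trace_sub, Matrix.trace_smul, Matrix.trace_smul,
    htr2] at htr
  have : S.trace / t = t⁻¹ * S.trace := by rw [div_eq_inv_mul]
  rw [this]
  simp only [smul_eq_mul] at htr
  linarith

lemma aux_psd_trace_nonneg {A : Matrix (Fin d) (Fin d) ℝ} (hA : A.PosSemidef) : 0 ≤ A.trace := by
  rw [Matrix.trace]
  exact Finset.sum_nonneg fun i _ => hA.diag_nonneg

lemma aux_pd_trace_pos [NeZero d] {A : Matrix (Fin d) (Fin d) ℝ} (hA : A.PosDef) :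
    0 < A.trace := by
  rw [Matrix.trace]
  refine Finset.sum_pos (fun i _ => ?_) Finset.univ_nonempty
  exact hA.diag_pos

lemma aux_quadform_le (Q : Matrix (Fin d) (Fin d) ℝ) (hQ : Qᵀ = Q) (x : Fin d → ℝ) :
    x ⬝ᵥ ((Q * Q) *ᵥ x) ≤ (Q * Q).trace * (x ⬝ᵥ x) := by
  have h1 : x ⬝ᵥ ((Q * Q) *ᵥ x) = (Q *ᵥ x) ⬝ᵥ (Q *ᵥ x) := by
    rw [← Matrix.mulVec_mulVec, Matrix.dotProduct_mulVec, ← Matrix.vecMul_transpose, hQ]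
  have h2 : (Q * Q).trace = ∑ i, ∑ j, Q i j ^ 2 := by
    simp only [Matrix.trace, Matrix.diag_apply, Matrix.mul_apply]
    refine Finset.sum_congr rfl fun i _ => Finset.sum_congr rfl fun j _ => ?_
    rw [sq]
    nth_rewrite 2 [← hQ]
    rfl
  rw [h1, h2, Finset.sum_mul]
  simp only [dotProduct, Matrix.mulVec, dotProduct]
  refine Finset.sum_le_sum fun i _ => ?_
  calc (∑ j, Q i j * x j) * (∑ j, Q i j * x j) = (∑ j, Q i j * x j) ^ 2 := (sq _).symm
    _ ≤ (∑ j, Q i j ^ 2) * ∑ j, x j ^ 2 := Finset.sum_mul_sq_le_sq_mul_sq _ _ _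
    _ = (∑ j, Q i j ^ 2) * ∑ j, x j * x j := by simp_rw [sq]

end Aux

/-- Every symmetric PSD `S` with `B(S) ≤ ρ²` satisfies `Tr S ≤ (ρ + √(Tr Σ))²`, and
consequently `S ⪯ (ρ + √(Tr Σ))² I`. -/
theorem stmt9 {d : ℕ} [NeZero d] (ρ : ℝ) (hρ : 0 < ρ) (Sg : Matrix (Fin d) (Fin d) ℝ)
    (hSg : Sg.PosDef) (S : Matrix (Fin d) (Fin d) ℝ) (hS : S.PosSemidef)
    (hB : Bdist Sg S ≤ ρ ^ 2) :
    S.trace ≤ (ρ + Real.sqrt Sg.trace) ^ 2 ∧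
      ((ρ + Real.sqrt Sg.trace) ^ 2 • (1 : Matrix (Fin d) (Fin d) ℝ) - S).PosSemidef := by
  -- set up the square roots
  set R := msqrt Sg with hRdef
  have hRpsd : R.PosSemidef := (msqrt_spec hSg.posSemidef).1
  have hRR : R * R = Sg := (msqrt_spec hSg.posSemidef).2
  have hRsym : Rᵀ = R := by
    rw [← Matrix.conjTranspose_eq_transpose_of_trivial]; exact hRpsd.1
  have hdet : IsUnit R.det := by
    rw [isUnit_iff_ne_zero]
    intro h
    have hd := hSg.det_pos
    rw [← hRR, Matrix.det_mul, h, mul_zero] at hd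
    exact lt_irrefl _ hd
  have h1 : R * R⁻¹ = 1 := Matrix.mul_nonsing_inv R hdet
  have h2 : R⁻¹ * R = 1 := Matrix.nonsing_inv_mul R hdet
  have hM : (R * S * R).PosSemidef := by
    have := hS.mul_mul_conjTranspose_same R
    rwa [hRpsd.1.eq] at this
  set N := msqrt (R * S * R) with hNdef
  have hNpsd : N.PosSemidef := (msqrt_spec hM).1
  have hNN : N * N = R * S * R := (msqrt_spec hM).2
  have hNsym : Nᵀ = N := by
    rw [← Matrix.conjTranspose_eq_transpose_of_trivial]; exact hNpsd.1
  -- unfold Bdist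
  have hm1 : msqrt Sg = R := rfl
  have hBeq : Bdist Sg S = S.trace + Sg.trace - 2 * N.trace := by
    rw [Bdist, hm1]
    have hm2 : msqrt (R * S * R) = N := rfl
    rw [hm2, Matrix.trace_sub, Matrix.trace_add, Matrix.trace_smul, smul_eq_mul]
  rw [hBeq] at hB
  set a := S.trace with hadef
  set b := Sg.trace with hbdef
  have ha0 : 0 ≤ a := aux_psd_trace_nonneg hS
  have hb0 : 0 < b := aux_pd_trace_pos hSg
  have hn0 : 0 ≤ N.trace := aux_psd_trace_nonneg hNpsd
  have key := aux_key_ineq R S N R⁻¹ Sg hRsym hNsym h1 h2 hRR hNN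
  -- main trace bound
  have hmain : a ≤ (ρ + Real.sqrt b) ^ 2 := by
    rcases eq_or_lt_of_le ha0 with h | h
    · have : (0:ℝ) ≤ (ρ + Real.sqrt b) ^ 2 := sq_nonneg _
      linarith [this]
    · set t := Real.sqrt a / Real.sqrt b with htdef
      have hsa : 0 < Real.sqrt a := Real.sqrt_pos.mpr h
      have hsb : 0 < Real.sqrt b := Real.sqrt_pos.mpr hb0
      have ht : 0 < t := div_pos hsa hsb
      have hk := key t ht
      have e1 : t * b = Real.sqrt a * Real.sqrt b := by
        rw [htdef, div_mul_eq_mul_div, mul_comm, ← div_mul_eq_mul_div, Real.div_sqrt]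
        ring
      have e2 : a / t = Real.sqrt a * Real.sqrt b := by
        rw [htdef, div_div_eq_mul_div, mul_div_assoc]
        nth_rewrite 1 [show a = Real.sqrt a * Real.sqrt a from (Real.mul_self_sqrt ha0).symm]
        field_simp
      rw [e1, e2] at hk
      have hsq : (Real.sqrt a - Real.sqrt b) ^ 2 ≤ ρ ^ 2 := by
        have haa : Real.sqrt a ^ 2 = a := Real.sq_sqrt ha0
        have hbb : Real.sqrt b ^ 2 = b := Real.sq_sqrt hb0.le
        nlinarith [hk, hB]
      have hle : Real.sqrt a ≤ ρ + Real.sqrt b := by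
        nlinarith [hsq, hρ, hsa, hsb]
      calc a = Real.sqrt a ^ 2 := (Real.sq_sqrt ha0).symm
        _ ≤ (ρ + Real.sqrt b) ^ 2 := by
            apply pow_le_pow_left₀ hsa.le hle
  refine ⟨hmain, Matrix.PosSemidef.of_dotProduct_mulVec_nonneg ?_ ?_⟩
  · -- Hermitian part
    show _ = _
    rw [Matrix.conjTranspose_sub, Matrix.conjTranspose_smul, Matrix.conjTranspose_one, hS.1.eq,
      star_trivial]
  · -- quadratic form part
    intro x
    set c := (ρ + Real.sqrt b) ^ 2 with hcdef
    have hc0 : 0 ≤ c := sq_nonneg _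
    have hxx : 0 ≤ x ⬝ᵥ x := Finset.sum_nonneg fun i _ => mul_self_nonneg _
    set Q := msqrt S with hQdef
    have hQQ : Q * Q = S := (msqrt_spec hS).2
    have hQsym : Qᵀ = Q := by
      rw [← Matrix.conjTranspose_eq_transpose_of_trivial]; exact (msqrt_spec hS).1.1
    have hq := aux_quadform_le Q hQsym x
    rw [hQQ] at hq
    have hbd : x ⬝ᵥ (S *ᵥ x) ≤ c * (x ⬝ᵥ x) :=
      le_trans hq (mul_le_mul_of_nonneg_right hmain hxx)
    simp only [Matrix.sub_mulVec, Matrix.smul_mulVec, Matrix.one_mulVec, dotProduct_sub,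
      dotProduct_smul, star_trivial, smul_eq_mul]
    linarith [hbd]
end

section
/- Let ρ > 0 and let Σ ∈ ℝ^{d×d} be symmetric positive definite. The supremum of Tr(S) over all symmetric positive semidefinite matrices S ∈ ℝ^{d×d} with B(S) ≤ ρ² equals (ρ + √(Tr Σ))², and it is attained at S⋆ = ((ρ + √(Tr Σ))² / Tr(Σ)) · Σ. -/
open Matrix

noncomputable def Matrix.PosSemidef.sqrt {ι : Type*} [Fintype ι] [DecidableEq ι]
    {M : Matrix ι ι ℝ} (h : M.PosSemidef) : Matrix ι ι ℝ :=
  h.1.eigenvectorUnitary.1 * diagonal ((↑) ∘ (√·) ∘ h.1.eigenvalues) *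
    (star h.1.eigenvectorUnitary : Matrix ι ι ℝ)

open scoped MatrixOrder in
lemma Matrix.PosSemidef.sqrt_eq_cfc {ι : Type*} [Fintype ι] [DecidableEq ι]
    {M : Matrix ι ι ℝ} (h : M.PosSemidef) : h.sqrt = CFC.sqrt M := by
  rw [CFC.sqrt_eq_cfc, cfc_nnreal_eq_real _ M h.nonneg, h.1.cfc_eq, IsHermitian.cfc,
    Unitary.conjStarAlgAut_apply, Matrix.PosSemidef.sqrt]
  congr 3
  funext i
  simp only [Function.comp_apply, RCLike.ofReal_real_eq_id, id_eq, Real.coe_sqrt,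
    Real.coe_toNNReal', max_eq_left (h.eigenvalues_nonneg i)]

open scoped MatrixOrder in
lemma Matrix.PosSemidef.posSemidef_sqrt {ι : Type*} [Fintype ι] [DecidableEq ι]
    {M : Matrix ι ι ℝ} (h : M.PosSemidef) : h.sqrt.PosSemidef := by
  rw [h.sqrt_eq_cfc]; exact (CFC.sqrt_nonneg M).posSemidef

open scoped MatrixOrder in
lemma Matrix.PosSemidef.sqrt_mul_self {ι : Type*} [Fintype ι] [DecidableEq ι]
    {M : Matrix ι ι ℝ} (h : M.PosSemidef) : h.sqrt * h.sqrt = M := by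
  rw [h.sqrt_eq_cfc]; exact CFC.sqrt_mul_sqrt_self M h.nonneg

open scoped MatrixOrder in
lemma Matrix.PosSemidef.eq_sqrt_of_sq_eq {ι : Type*} [Fintype ι] [DecidableEq ι]
    {A B : Matrix ι ι ℝ} (hB : B.PosSemidef) (hA : A.PosSemidef) (hsq : B ^ 2 = A) :
    B = hA.sqrt := by
  rw [hA.sqrt_eq_cfc]; exact (CFC.sqrt_unique (by rw [← sq]; exact hsq) hB.nonneg).symm

lemma msqrt_eq {ι : Type*} [Fintype ι] [DecidableEq ι] {M : Matrix ι ι ℝ} (h : M.PosSemidef) :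
    msqrt M = h.sqrt := dif_pos h

lemma psd_trace_nonneg {ι : Type*} [Fintype ι] [DecidableEq ι] {M : Matrix ι ι ℝ}
    (h : M.PosSemidef) : 0 ≤ M.trace := by
  rw [Matrix.trace]
  refine Finset.sum_nonneg fun i _ => ?_
  have := h.dotProduct_mulVec_nonneg (Pi.single i 1)
  simpa [dotProduct, Matrix.mulVec, Pi.single_apply] using this

lemma trace_eq_sum_prod {ι : Type*} [Fintype ι] [DecidableEq ι] (A B : Matrix ι ι ℝ) :
    (Aᵀ * B).trace = ∑ p : ι × ι, A p.1 p.2 * B p.1 p.2 := by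
  rw [Matrix.trace, Fintype.sum_prod_type]
  simp only [Matrix.diag, Matrix.mul_apply, Matrix.transpose_apply]
  exact Finset.sum_comm

lemma trace_CS {ι : Type*} [Fintype ι] [DecidableEq ι] (A B : Matrix ι ι ℝ) :
    (Aᵀ * B).trace ≤ Real.sqrt (Aᵀ * A).trace * Real.sqrt (Bᵀ * B).trace := by
  have key : ((Aᵀ * B).trace) ^ 2 ≤ (Aᵀ * A).trace * (Bᵀ * B).trace := by
    have h := Finset.sum_mul_sq_le_sq_mul_sq Finset.univ
      (fun p : ι × ι => A p.1 p.2) (fun p : ι × ι => B p.1 p.2)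
    rw [trace_eq_sum_prod A B, trace_eq_sum_prod A A, trace_eq_sum_prod B B]
    simpa only [← sq] using h
  have hA : 0 ≤ (Aᵀ * A).trace := by
    have := Matrix.posSemidef_conjTranspose_mul_self A
    rw [Matrix.conjTranspose_eq_transpose_of_trivial] at this
    exact psd_trace_nonneg this
  calc (Aᵀ * B).trace ≤ |(Aᵀ * B).trace| := le_abs_self _
    _ = Real.sqrt (((Aᵀ * B).trace) ^ 2) := (Real.sqrt_sq_eq_abs _).symm
    _ ≤ Real.sqrt ((Aᵀ * A).trace * (Bᵀ * B).trace) := Real.sqrt_le_sqrt key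
    _ = _ := Real.sqrt_mul hA _

lemma herm_transpose {ι : Type*} [Fintype ι] [DecidableEq ι] {M : Matrix ι ι ℝ}
    (h : M.IsHermitian) : Mᵀ = M := by
  have := h.eq
  rwa [Matrix.conjTranspose_eq_transpose_of_trivial] at this

lemma trace_conj {ι : Type*} [Fintype ι] [DecidableEq ι] (A V : Matrix ι ι ℝ) :
    (Vᵀ * A * V).trace = (A * (V * Vᵀ)).trace := by
  rw [Matrix.trace_mul_cycle]
  exact Matrix.trace_mul_comm _ _

lemma trace_msqrt_le {d : ℕ} {Sg S : Matrix (Fin d) (Fin d) ℝ}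
    (hSg : Sg.PosSemidef) (hS : S.PosSemidef) :
    (msqrt (msqrt Sg * S * msqrt Sg)).trace ≤ Real.sqrt S.trace * Real.sqrt Sg.trace := by
  rw [msqrt_eq hSg]
  set X := hSg.sqrt with hXdef
  set Y := hS.sqrt with hYdef
  have hX : X.PosSemidef := hSg.posSemidef_sqrt
  have hY : Y.PosSemidef := hS.posSemidef_sqrt
  have hXt : Xᵀ = X := herm_transpose hX.1
  have hYt : Yᵀ = Y := herm_transpose hY.1
  have hXX : X * X = Sg := hSg.sqrt_mul_self
  have hYY : Y * Y = S := hS.sqrt_mul_self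
  have hM : (X * S * X).PosSemidef := by
    have := hS.mul_mul_conjTranspose_same X
    rwa [Matrix.conjTranspose_eq_transpose_of_trivial, hXt] at this
  rw [msqrt_eq hM]
  set μ := hM.1.eigenvalues with hμdef
  have hμ0 : ∀ i, 0 ≤ μ i := hM.eigenvalues_nonneg
  set U : Matrix (Fin d) (Fin d) ℝ := (hM.1.eigenvectorUnitary : Matrix (Fin d) (Fin d) ℝ)
    with hUdef
  have hUU : Uᵀ * U = 1 := by
    have := Unitary.coe_star_mul_self hM.1.eigenvectorUnitary
    rwa [Matrix.star_eq_conjTranspose, Matrix.conjTranspose_eq_transpose_of_trivial] at this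
  have hUU' : U * Uᵀ = 1 := by
    have := Unitary.coe_mul_star_self hM.1.eigenvectorUnitary
    rwa [Unitary.coe_star, Matrix.star_eq_conjTranspose,
      Matrix.conjTranspose_eq_transpose_of_trivial] at this
  have hdiag : Uᵀ * (X * S * X) * U = Matrix.diagonal μ := by
    have := hM.1.spectral_theorem
    rw [Unitary.conjStarAlgAut_apply, Matrix.star_eq_conjTranspose,
      Matrix.conjTranspose_eq_transpose_of_trivial] at this
    conv_lhs => rw [this]
    rw [show Uᵀ * (U * diagonal (RCLike.ofReal ∘ μ) * Uᵀ) * U =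
        (Uᵀ * U) * diagonal (RCLike.ofReal ∘ μ) * (Uᵀ * U) by simp only [Matrix.mul_assoc],
      hUU, Matrix.one_mul, Matrix.mul_one]
    simp [RCLike.ofReal_real_eq_id]
  have htr : hM.sqrt.trace = ∑ i, Real.sqrt (μ i) := by
    rw [Matrix.PosSemidef.sqrt, Matrix.trace_mul_cycle]
    rw [show (star (hM.1.eigenvectorUnitary : Matrix (Fin d) (Fin d) ℝ)) *
        (hM.1.eigenvectorUnitary : Matrix (Fin d) (Fin d) ℝ) = 1 from
      Unitary.coe_star_mul_self hM.1.eigenvectorUnitary, one_mul, Matrix.trace_diagonal]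
    simp [RCLike.ofReal_real_eq_id]
    rfl
  set Dinv : Matrix (Fin d) (Fin d) ℝ :=
    Matrix.diagonal (fun i => if 0 < μ i then (Real.sqrt (μ i))⁻¹ else 0) with hDdef
  set V : Matrix (Fin d) (Fin d) ℝ := Y * X * U * Dinv with hVdef
  have hDt : Dinvᵀ = Dinv := Matrix.diagonal_transpose _
  have h2 : ((Y * V)ᵀ * (X * U)) = Dinv * Matrix.diagonal μ := by
    rw [← hdiag, ← hYY, hVdef]
    simp only [Matrix.transpose_mul, hXt, hYt, hDt, Matrix.mul_assoc]
  have h3 : ((Y * V)ᵀ * (X * U)).trace = ∑ i, Real.sqrt (μ i) := by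
    rw [h2, Matrix.diagonal_mul_diagonal, Matrix.trace_diagonal]
    refine Finset.sum_congr rfl fun i _ => ?_
    by_cases h : 0 < μ i
    · simp only [if_pos h, inv_mul_eq_div, Real.div_sqrt]
    · have : μ i = 0 := le_antisymm (not_lt.1 h) (hμ0 i)
      simp [this]
  have hVtV : Vᵀ * V = Matrix.diagonal (fun i => if 0 < μ i then (1:ℝ) else 0) := by
    have e : Vᵀ * V = Dinv * (Uᵀ * (X * S * X) * U) * Dinv := by
      rw [← hYY, hVdef]
      simp only [Matrix.transpose_mul, hXt, hYt, hDt, Matrix.mul_assoc]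
    rw [e, hdiag, hDdef, Matrix.diagonal_mul_diagonal, Matrix.diagonal_mul_diagonal]
    refine congrArg Matrix.diagonal (funext fun i => ?_)
    by_cases h : 0 < μ i
    · have hs : Real.sqrt (μ i) ≠ 0 := by positivity
      simp only [if_pos h]
      field_simp
      rw [Real.sq_sqrt (hμ0 i)]
    · simp [h]
  have hDe : Dinv * Matrix.diagonal (fun i => if 0 < μ i then (1:ℝ) else 0) = Dinv := by
    rw [hDdef, Matrix.diagonal_mul_diagonal]
    refine congrArg Matrix.diagonal (funext fun i => ?_)
    by_cases h : 0 < μ i <;> simp [h]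
  have hVe : V * Matrix.diagonal (fun i => if 0 < μ i then (1:ℝ) else 0) = V := by
    rw [hVdef, Matrix.mul_assoc (Y * X * U) Dinv, hDe]
  set P : Matrix (Fin d) (Fin d) ℝ := V * Vᵀ with hPdef
  have hPt : Pᵀ = P := by rw [hPdef, Matrix.transpose_mul, Matrix.transpose_transpose]
  have hPP : P * P = P := by
    rw [hPdef, Matrix.mul_assoc, ← Matrix.mul_assoc Vᵀ, hVtV, ← Matrix.mul_assoc, hVe]
  have hSP : ((Y * V)ᵀ * (Y * V)).trace = (S * P).trace := by
    have : (Y * V)ᵀ * (Y * V) = Vᵀ * S * V := by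
      rw [← hYY]
      simp only [Matrix.transpose_mul, hYt, Matrix.mul_assoc]
    rw [this, hPdef]
    exact trace_conj S V
  have hproj : (S * P).trace ≤ S.trace := by
    have hpsd : ((1 - P) * S * (1 - P)).PosSemidef := by
      have := hS.mul_mul_conjTranspose_same (1 - P)
      rwa [Matrix.conjTranspose_eq_transpose_of_trivial, Matrix.transpose_sub,
        Matrix.transpose_one, hPt] at this
    have hexp : ((1 - P) * S * (1 - P)).trace = S.trace - (S * P).trace := by
      have e1 : (1 - P) * S * (1 - P) = S - P * S - S * P + P * S * P := by
        noncomm_ring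
      rw [e1, Matrix.trace_add, Matrix.trace_sub, Matrix.trace_sub]
      have e2 : (P * S * P).trace = (S * P).trace := by
        rw [Matrix.trace_mul_cycle, hPP]
        exact Matrix.trace_mul_comm _ _
      have e3 : (P * S).trace = (S * P).trace := Matrix.trace_mul_comm _ _
      rw [e2, e3]; ring
    have := psd_trace_nonneg hpsd
    rw [hexp] at this
    linarith
  have hcs := trace_CS (Y * V) (X * U)
  have hXU : ((X * U)ᵀ * (X * U)).trace = Sg.trace := by
    have : (X * U)ᵀ * (X * U) = Uᵀ * Sg * U := by
      rw [← hXX]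
      simp only [Matrix.transpose_mul, hXt, Matrix.mul_assoc]
    rw [this, Matrix.trace_mul_cycle, hUU', one_mul]
  have hSPnn : 0 ≤ (S * P).trace := by
    rw [← hSP]
    have := Matrix.posSemidef_conjTranspose_mul_self (Y * V)
    rw [Matrix.conjTranspose_eq_transpose_of_trivial] at this
    exact psd_trace_nonneg this
  calc hM.sqrt.trace = ((Y * V)ᵀ * (X * U)).trace := by rw [htr, h3]
    _ ≤ Real.sqrt ((Y * V)ᵀ * (Y * V)).trace * Real.sqrt ((X * U)ᵀ * (X * U)).trace := hcs
    _ = Real.sqrt (S * P).trace * Real.sqrt Sg.trace := by rw [hSP, hXU]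
    _ ≤ Real.sqrt S.trace * Real.sqrt Sg.trace := by
        gcongr

lemma psd_smul {ι : Type*} [Fintype ι] [DecidableEq ι] {A : Matrix ι ι ℝ} (hA : A.PosSemidef)
    {c : ℝ} (hc : 0 ≤ c) : (c • A).PosSemidef := by
  exact hA.smul hc

lemma posdef_trace_pos {d : ℕ} [NeZero d] {A : Matrix (Fin d) (Fin d) ℝ} (hA : A.PosDef) :
    0 < A.trace := by
  rw [Matrix.trace]
  refine Finset.sum_pos (fun i _ => ?_) Finset.univ_nonempty
  exact hA.diag_pos

lemma msqrt_smul {d : ℕ} {Sg : Matrix (Fin d) (Fin d) ℝ} (hSg : Sg.PosSemidef) {c : ℝ}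
    (hc : 0 ≤ c) : msqrt (msqrt Sg * (c • Sg) * msqrt Sg) = Real.sqrt c • Sg := by
  have hXX : hSg.sqrt * hSg.sqrt = Sg := hSg.sqrt_mul_self
  have hmat : msqrt Sg * (c • Sg) * msqrt Sg = c • (Sg * Sg) := by
    rw [msqrt_eq hSg, Matrix.mul_smul, Matrix.smul_mul]
    congr 1
    revert hXX
    generalize hSg.sqrt = x
    intro hXX
    rw [← hXX]
    noncomm_ring
  have hpsd2 : (Sg * Sg).PosSemidef := by
    have := Matrix.posSemidef_self_mul_conjTranspose Sg
    rwa [Matrix.conjTranspose_eq_transpose_of_trivial,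
      (by rw [← Matrix.conjTranspose_eq_transpose_of_trivial]; exact hSg.1.eq : Sgᵀ = Sg)] at this
  have hpsd : (c • (Sg * Sg)).PosSemidef := psd_smul hpsd2 hc
  have hsqpsd : (Real.sqrt c • Sg).PosSemidef := psd_smul hSg (Real.sqrt_nonneg c)
  have hsq : (Real.sqrt c • Sg) ^ 2 = c • (Sg * Sg) := by
    rw [pow_two, Matrix.smul_mul, Matrix.mul_smul, smul_smul, Real.mul_self_sqrt hc]
  rw [hmat, msqrt_eq hpsd]
  exact (Matrix.PosSemidef.eq_sqrt_of_sq_eq hsqpsd hpsd hsq).symm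

lemma Bdist_eq {ι : Type*} [Fintype ι] [DecidableEq ι] (Sg S : Matrix ι ι ℝ) :
    Bdist Sg S = S.trace + Sg.trace - 2 * (msqrt (msqrt Sg * S * msqrt Sg)).trace := by
  unfold Bdist
  rw [Matrix.trace_sub, Matrix.trace_add, Matrix.trace_smul]
  simp [smul_eq_mul]

/-- The supremum of `Tr S` over symmetric PSD `S` with `B(S) ≤ ρ²` equals `(ρ + √(Tr Σ))²`,
attained at `S⋆ = ((ρ + √(Tr Σ))²/Tr Σ) Σ`. -/
theorem stmt10 {d : ℕ} [NeZero d] (ρ : ℝ) (hρ : 0 < ρ) (Sg : Matrix (Fin d) (Fin d) ℝ)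
    (hSg : Sg.PosDef) :
    IsGreatest { r : ℝ | ∃ S : Matrix (Fin d) (Fin d) ℝ, S.PosSemidef ∧ Bdist Sg S ≤ ρ ^ 2 ∧
        r = S.trace } ((ρ + Real.sqrt Sg.trace) ^ 2) ∧
      (((ρ + Real.sqrt Sg.trace) ^ 2 / Sg.trace) • Sg).PosSemidef ∧
      Bdist Sg (((ρ + Real.sqrt Sg.trace) ^ 2 / Sg.trace) • Sg) ≤ ρ ^ 2 ∧
      (((ρ + Real.sqrt Sg.trace) ^ 2 / Sg.trace) • Sg).trace = (ρ + Real.sqrt Sg.trace) ^ 2 := by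
  have hT : 0 < Sg.trace := posdef_trace_pos hSg
  set T := Sg.trace with hTdef
  set s := Real.sqrt T with hsdef
  have hs : 0 < s := Real.sqrt_pos.2 hT
  have hss : s * s = T := Real.mul_self_sqrt hT.le
  set c : ℝ := (ρ + s) ^ 2 / T with hcdef
  have hρs : 0 < ρ + s := by linarith
  have hc : 0 ≤ c := by positivity
  have hsc : Real.sqrt c = (ρ + s) / s := by
    rw [hcdef, ← hss, show (ρ + s) ^ 2 / (s * s) = ((ρ + s) / s) ^ 2 by ring,
      Real.sqrt_sq (by positivity)]
  -- facts about S⋆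
  have hstar_psd : (c • Sg).PosSemidef := psd_smul hSg.posSemidef hc
  have hstar_tr : (c • Sg).trace = (ρ + s) ^ 2 := by
    rw [Matrix.trace_smul, smul_eq_mul, ← hTdef, hcdef, div_mul_cancel₀ _ (ne_of_gt hT)]
  have hstar_B : Bdist Sg (c • Sg) = ρ ^ 2 := by
    rw [Bdist_eq, msqrt_smul hSg.posSemidef hc]
    simp only [Matrix.trace_smul, smul_eq_mul]
    rw [← hTdef, hsc, hcdef, ← hss]
    field_simp
    ring
  -- upper bound
  have hub : ∀ r ∈ { r : ℝ | ∃ S : Matrix (Fin d) (Fin d) ℝ, S.PosSemidef ∧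
      Bdist Sg S ≤ ρ ^ 2 ∧ r = S.trace }, r ≤ (ρ + s) ^ 2 := by
    rintro r ⟨S, hSpsd, hB, rfl⟩
    have htnn : 0 ≤ S.trace := psd_trace_nonneg hSpsd
    set t := S.trace with htdef
    have hsq : Real.sqrt t * Real.sqrt t = t := Real.mul_self_sqrt htnn
    have hkey := trace_msqrt_le hSg.posSemidef hSpsd
    rw [Bdist_eq] at hB
    have h1 : (Real.sqrt t - s) ^ 2 ≤ ρ ^ 2 := by
      have h0 : t + T - 2 * (Real.sqrt t * s) ≤ ρ ^ 2 := by
        rw [← htdef] at hB hkey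
        linarith [hkey, hB]
      nlinarith [h0, hsq, hss]
    have h2 : Real.sqrt t - s ≤ ρ := by
      have := Real.sqrt_le_sqrt h1
      rw [Real.sqrt_sq_eq_abs, Real.sqrt_sq hρ.le] at this
      exact le_trans (le_abs_self _) this
    have h3 : Real.sqrt t ≤ ρ + s := by linarith
    calc t = Real.sqrt t * Real.sqrt t := hsq.symm
      _ ≤ (ρ + s) * (ρ + s) := by
          have := Real.sqrt_nonneg t
          nlinarith
      _ = (ρ + s) ^ 2 := by ring
  refine ⟨⟨⟨c • Sg, hstar_psd, le_of_eq hstar_B, hstar_tr.symm⟩, hub⟩,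
    hstar_psd, le_of_eq hstar_B, hstar_tr⟩
end
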